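/- The constructions X ↦ (E_X, M_X) on Cnr(X) and (E,M) ↦ D_{E,M} define mutually inverse equivalences between the category CodDiscr of codomain-discrete double categories (with double functors) and the category SFS of strict factorization systems (with functors preserving both classes). -/

import Mathlib

open CategoryTheory

universe u

namespace Paper

/-- A (strict) double category, presented elementarily: objects, vertical morphisms,
horizontal morphisms and squares, with vertical and horizontal compositions of squares. -/
structure DblCat : Type (u + 1) where
  Obj : Type u
  Ver : Obj → Obj → Type u
  Hor : Obj → Obj → Type u
  vId : ∀ a, Ver a a
  vComp : ∀ {a b c}, Ver a b → Ver b c → Ver a c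
  hId : ∀ a, Hor a a
  hComp : ∀ {a b c}, Hor a b → Hor b c → Hor a c
  vId_comp : ∀ {a b} (f : Ver a b), vComp (vId a) f = f
  vComp_id : ∀ {a b} (f : Ver a b), vComp f (vId b) = f
  vAssoc : ∀ {a b c d} (f : Ver a b) (g : Ver b c) (h : Ver c d),
    vComp (vComp f g) h = vComp f (vComp g h)
  hId_comp : ∀ {a b} (f : Hor a b), hComp (hId a) f = f
  hComp_id : ∀ {a b} (f : Hor a b), hComp f (hId b) = f
  hAssoc : ∀ {a b c d} (f : Hor a b) (g : Hor b c) (h : Hor c d),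
    hComp (hComp f g) h = hComp f (hComp g h)
  /-- squares, indexed by top, left, right, bottom boundary -/
  Sq : ∀ {a b c d}, Hor a b → Ver a c → Ver b d → Hor c d → Type u
  vSq : ∀ {a b c d e f : Obj} {t : Hor a b} {l : Ver a c} {r : Ver b d} {m : Hor c d}
    {l' : Ver c e} {r' : Ver d f} {bo : Hor e f},
    Sq t l r m → Sq m l' r' bo → Sq t (vComp l l') (vComp r r') bo
  hSq : ∀ {a b c a' b' c' : Obj} {t1 : Hor a b} {t2 : Hor b c} {l : Ver a a'} {m : Ver b b'}
    {r : Ver c c'} {b1 : Hor a' b'} {b2 : Hor b' c'},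
    Sq t1 l m b1 → Sq t2 m r b2 → Sq (hComp t1 t2) l r (hComp b1 b2)
  vIdSq : ∀ {a b} (g : Hor a b), Sq g (vId a) (vId b) g
  hIdSq : ∀ {a b} (u : Ver a b), Sq (hId a) u u (hId b)
  vSq_id_comp : ∀ {a b c d} {t : Hor a b} {l : Ver a c} {r : Ver b d} {bo : Hor c d}
    (α : Sq t l r bo), HEq (vSq (vIdSq t) α) α
  vSq_comp_id : ∀ {a b c d} {t : Hor a b} {l : Ver a c} {r : Ver b d} {bo : Hor c d}
    (α : Sq t l r bo), HEq (vSq α (vIdSq bo)) α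
  vSq_assoc : ∀ {a b c d e f g h : Obj} {t : Hor a b} {l : Ver a c} {r : Ver b d}
    {m1 : Hor c d} {l' : Ver c e} {r' : Ver d f} {m2 : Hor e f}
    {l'' : Ver e g} {r'' : Ver f h} {bo : Hor g h}
    (α : Sq t l r m1) (β : Sq m1 l' r' m2) (γ : Sq m2 l'' r'' bo),
    HEq (vSq (vSq α β) γ) (vSq α (vSq β γ))
  hSq_id_comp : ∀ {a b c d} {t : Hor a b} {l : Ver a c} {r : Ver b d} {bo : Hor c d}
    (α : Sq t l r bo), HEq (hSq (hIdSq l) α) α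
  hSq_comp_id : ∀ {a b c d} {t : Hor a b} {l : Ver a c} {r : Ver b d} {bo : Hor c d}
    (α : Sq t l r bo), HEq (hSq α (hIdSq r)) α
  hSq_assoc : ∀ {a b c d a' b' c' d' : Obj} {t1 : Hor a b} {t2 : Hor b c} {t3 : Hor c d}
    {l : Ver a a'} {m1 : Ver b b'} {m2 : Ver c c'} {r : Ver d d'}
    {b1 : Hor a' b'} {b2 : Hor b' c'} {b3 : Hor c' d'}
    (α : Sq t1 l m1 b1) (β : Sq t2 m1 m2 b2) (γ : Sq t3 m2 r b3),
    HEq (hSq (hSq α β) γ) (hSq α (hSq β γ))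
  interchange : ∀ {a b c a' b' c' a'' b'' c'' : Obj}
    {t1 : Hor a b} {t2 : Hor b c} {l : Ver a a'} {m : Ver b b'} {r : Ver c c'}
    {b1 : Hor a' b'} {b2 : Hor b' c'}
    {l' : Ver a' a''} {m' : Ver b' b''} {r' : Ver c' c''}
    {c1 : Hor a'' b''} {c2 : Hor b'' c''}
    (α : Sq t1 l m b1) (γ : Sq t2 m r b2) (β : Sq b1 l' m' c1) (δ : Sq b2 m' r' c2),
    hSq (vSq α β) (vSq γ δ) = vSq (hSq α γ) (hSq β δ)
  vIdSq_hId : ∀ a, vIdSq (hId a) = hIdSq (vId a)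
  vIdSq_hComp : ∀ {a b c} (g : Hor a b) (h : Hor b c),
    vIdSq (hComp g h) = hSq (vIdSq g) (vIdSq h)
  hIdSq_vComp : ∀ {a b c} (u : Ver a b) (v : Ver b c),
    hIdSq (vComp u v) = vSq (hIdSq u) (hIdSq v)

namespace DblCat

variable (X : DblCat.{u})

/-- A square `κ` (with top `g`, left `l`, right `u`, bottom `bo`) is opcartesian
(with respect to the codomain functor `d₀ : X₁ → X₀`). -/
def Opcart {a b bh c : X.Obj} {g : X.Hor a b} {l : X.Ver a bh} {u : X.Ver b c}
    {bo : X.Hor bh c} (κ : X.Sq g l u bo) : Prop :=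
  ∀ {d e : X.Obj} (w : X.Ver a d) (v : X.Ver c e) (h : X.Hor d e)
    (α : X.Sq g w (X.vComp u v) h),
    ∃! p : Σ' θ : X.Ver bh d, X.Sq bo θ v h,
      X.vComp l p.1 = w ∧ HEq (X.vSq κ p.2) α

/-- A crossed double category: every top-right corner has an opcartesian filler,
horizontal identity squares are opcartesian, and opcartesian squares are closed under
horizontal composition. -/
def Crossed : Prop :=
  (∀ {a b c : X.Obj} (g : X.Hor a b) (u : X.Ver b c),
      ∃ (bh : X.Obj) (l : X.Ver a bh) (bo : X.Hor bh c) (κ : X.Sq g l u bo), X.Opcart κ) ∧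
  (∀ {a b : X.Obj} (u : X.Ver a b), X.Opcart (X.hIdSq u)) ∧
  (∀ {a b c a' b' c' : X.Obj} {t1 : X.Hor a b} {t2 : X.Hor b c} {l : X.Ver a a'}
      {m : X.Ver b b'} {r : X.Ver c c'} {b1 : X.Hor a' b'} {b2 : X.Hor b' c'}
      (κ1 : X.Sq t1 l m b1) (κ2 : X.Sq t2 m r b2),
      X.Opcart κ1 → X.Opcart κ2 → X.Opcart (X.hSq κ1 κ2))

/-- Opcartesian in `X* = ((Xᵛ)ʰ)ᵀ`, expressed elementarily in `X`. -/
def Opcart2 {a b bh c : X.Obj} {g : X.Hor a b} {l : X.Ver a bh} {u : X.Ver b c}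
    {bo : X.Hor bh c} (κ : X.Sq g l u bo) : Prop :=
  ∀ {e : X.Obj} (w : X.Ver a e) (k : X.Hor e c) (α : X.Sq g w u k),
    ∃! p : Σ' ψ : X.Hor e bh, X.Sq (X.hId a) w l ψ,
      HEq (X.hSq p.2 κ) α

/-- Bicartesian squares: opcartesian in both `X` and `X*`. -/
def Bicart {a b bh c : X.Obj} {g : X.Hor a b} {l : X.Ver a bh} {u : X.Ver b c}
    {bo : X.Hor bh c} (κ : X.Sq g l u bo) : Prop :=
  X.Opcart κ ∧ X.Opcart2 κ

/-- Top-right bicrossed double category. -/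
def TopRightBicrossed : Prop :=
  (∀ {a b c : X.Obj} (g : X.Hor a b) (u : X.Ver b c),
      ∃ (bh : X.Obj) (l : X.Ver a bh) (bo : X.Hor bh c) (κ : X.Sq g l u bo), X.Bicart κ) ∧
  (∀ {a b : X.Obj} (u : X.Ver a b), X.Bicart (X.hIdSq u)) ∧
  (∀ {a b : X.Obj} (g : X.Hor a b), X.Bicart (X.vIdSq g)) ∧
  (∀ {a b c a' b' c' : X.Obj} {t1 : X.Hor a b} {t2 : X.Hor b c} {l : X.Ver a a'}
      {m : X.Ver b b'} {r : X.Ver c c'} {b1 : X.Hor a' b'} {b2 : X.Hor b' c'}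
      (κ1 : X.Sq t1 l m b1) (κ2 : X.Sq t2 m r b2),
      X.Bicart κ1 → X.Bicart κ2 → X.Bicart (X.hSq κ1 κ2)) ∧
  (∀ {a b c d e f : X.Obj} {t : X.Hor a b} {l : X.Ver a c} {r : X.Ver b d} {m : X.Hor c d}
      {l' : X.Ver c e} {r' : X.Ver d f} {bo : X.Hor e f}
      (κ1 : X.Sq t l r m) (κ2 : X.Sq m l' r' bo),
      X.Bicart κ1 → X.Bicart κ2 → X.Bicart (X.vSq κ1 κ2))

/-- Codomain-discrete double category: every top-right corner fills into a unique square. -/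
def CodDiscrete : Prop :=
  ∀ {a b c : X.Obj} (g : X.Hor a b) (u : X.Ver b c),
    ∃! p : Σ' (bh : X.Obj) (l : X.Ver a bh) (bo : X.Hor bh c), X.Sq g l u bo, True

/-- Every top-right corner can be filled into (at least) one square. -/
def CornerFill : Prop :=
  ∀ {a b c : X.Obj} (g : X.Hor a b) (u : X.Ver b c),
    ∃ (bh : X.Obj) (l : X.Ver a bh) (bo : X.Hor bh c), Nonempty (X.Sq g l u bo)

def AllOpcart : Prop :=
  ∀ {a b c d : X.Obj} {t : X.Hor a b} {l : X.Ver a c} {r : X.Ver b d} {bo : X.Hor c d}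
    (κ : X.Sq t l r bo), X.Opcart κ

def AllBicart : Prop :=
  ∀ {a b c d : X.Obj} {t : X.Hor a b} {l : X.Ver a c} {r : X.Ver b d} {bo : X.Hor c d}
    (κ : X.Sq t l r bo), X.Bicart κ

def HIso {a b : X.Obj} (g : X.Hor a b) : Prop :=
  ∃ g' : X.Hor b a, X.hComp g g' = X.hId a ∧ X.hComp g' g = X.hId b

def VIso {a b : X.Obj} (u : X.Ver a b) : Prop :=
  ∃ u' : X.Ver b a, X.vComp u u' = X.vId a ∧ X.vComp u' u = X.vId b

/-- Strict horizontal invariance. -/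
def HorInvariant : Prop :=
  ∀ {a b c d : X.Obj} (g : X.Hor a b) (h : X.Hor c d) (u : X.Ver b d),
    X.HIso g → X.HIso h → ∃! _p : Σ' w : X.Ver a c, X.Sq g w u h, True

/-- Strict vertical invariance. -/
def VerInvariant : Prop :=
  ∀ {a b c d : X.Obj} (g : X.Hor a b) (u : X.Ver a c) (v : X.Ver b d),
    X.VIso u → X.VIso v → ∃! _p : Σ' h : X.Hor c d, X.Sq g u v h, True

def Invariant : Prop := X.HorInvariant ∧ X.VerInvariant

/-- The top-left corner `(π₁, π₂)` of the vertical dual `Xᵛ`, expressed in `X`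
(`π₁ : a → a'` vertical in `X`, `π₂ : a' → b` horizontal), is jointly monic. -/
def JMonicVDual {a a' b : X.Obj} (π₁ : X.Ver a a') (π₂ : X.Hor a' b) : Prop :=
  ∀ {a'' : X.Obj} (θ θ' : X.Ver a' a'') (ψ ψ' : X.Hor a'' a')
    (_κ1 : X.Sq (X.hId a') θ (X.vId a') ψ) (_κ2 : X.Sq (X.hId a') θ' (X.vId a') ψ'),
    X.vComp π₁ θ = X.vComp π₁ θ' → X.hComp ψ π₂ = X.hComp ψ' π₂ → θ = θ' ∧ ψ = ψ'

/-- Factorization double category. -/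
def IsFactDbl : Prop :=
  X.Invariant ∧ X.CornerFill ∧ X.AllBicart ∧
  (∀ {a a' b : X.Obj} (π₁ : X.Ver a a') (π₂ : X.Hor a' b), X.JMonicVDual π₁ π₂)

/-- A corner from `a` to `b`: a vertical morphism followed by a horizontal one. -/
structure Corner (a b : X.Obj) : Type u where
  mid : X.Obj
  v : X.Ver a mid
  h : X.Hor mid b

/-- A 2-cell between corners. -/
def CellRel {a b : X.Obj} (c1 c2 : X.Corner a b) : Prop :=
  ∃ (θ : X.Ver c1.mid c2.mid) (_β : X.Sq c1.h θ (X.vId b) c2.h), X.vComp c1.v θ = c2.v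

/-- Morphisms of the category of corners: corners modulo zigzags of 2-cells. -/
def CnrHom (a b : X.Obj) : Type u := Quot (fun c1 c2 : X.Corner a b => X.CellRel c1 c2)

def mkCnr {a b : X.Obj} (c : X.Corner a b) : X.CnrHom a b := Quot.mk _ c

/-- The vertical corner `[u, 1]`. -/
def mkE {a b : X.Obj} (u : X.Ver a b) : X.CnrHom a b := X.mkCnr ⟨b, u, X.hId b⟩

/-- The horizontal corner `[1, g]`. -/
def mkM {a b : X.Obj} (g : X.Hor a b) : X.CnrHom a b := X.mkCnr ⟨a, X.vId a, g⟩

/-- The identity corner `[1ₐ, 1ₐ]`. -/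
def cnrId (a : X.Obj) : X.CnrHom a a := X.mkCnr ⟨a, X.vId a, X.hId a⟩

/-- A composition operation on corners which is computed by filling the middle
corner with (any) opcartesian square. -/
structure CnrStruct (X : DblCat.{u}) where
  comp : ∀ {a b c : X.Obj}, X.CnrHom a b → X.CnrHom b c → X.CnrHom a c
  compat : ∀ {a m1 b m2 c bh : X.Obj} (u : X.Ver a m1) (g : X.Hor m1 b)
    (v : X.Ver b m2) (h : X.Hor m2 c)
    (w : X.Ver m1 bh) (bo : X.Hor bh m2) (κ : X.Sq g w v bo), X.Opcart κ →
    comp (X.mkCnr ⟨m1, u, g⟩) (X.mkCnr ⟨m2, v, h⟩) =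
      X.mkCnr ⟨bh, X.vComp u w, X.hComp bo h⟩

/-- The category of corners: a corner composition which is unital and associative. -/
structure CnrCat (X : DblCat.{u}) extends CnrStruct X where
  id_comp : ∀ {a b : X.Obj} (f : X.CnrHom a b), comp (X.cnrId a) f = f
  comp_id : ∀ {a b : X.Obj} (f : X.CnrHom a b), comp f (X.cnrId b) = f
  assoc : ∀ {a b c d : X.Obj} (f : X.CnrHom a b) (g : X.CnrHom b c) (h : X.CnrHom c d),
    comp (comp f g) h = comp f (comp g h)

/-- The class `E_X` of vertical corners. -/
def InE {a b : X.Obj} (f : X.CnrHom a b) : Prop := ∃ u : X.Ver a b, f = X.mkE u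

/-- The class `M_X` of horizontal corners. -/
def InM {a b : X.Obj} (f : X.CnrHom a b) : Prop := ∃ g : X.Hor a b, f = X.mkM g

/-- Isomorphisms in the category of corners. -/
def CnrIso (c : CnrStruct X) {a b : X.Obj} (f : X.CnrHom a b) : Prop :=
  ∃ g : X.CnrHom b a, c.comp f g = X.cnrId a ∧ c.comp g f = X.cnrId b

end DblCat

end Paper

namespace Paper

/-- Strict factorization system. -/
structure IsStrictFS (C : Type u) [Category.{u} C]
    (E M : CategoryTheory.MorphismProperty C) : Prop where
  E_id : ∀ a : C, E (𝟙 a)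
  E_comp : ∀ {a b c : C} (f : a ⟶ b) (g : b ⟶ c), E f → E g → E (f ≫ g)
  M_id : ∀ a : C, M (𝟙 a)
  M_comp : ∀ {a b c : C} (f : a ⟶ b) (g : b ⟶ c), M f → M g → M (f ≫ g)
  fac : ∀ {a c : C} (f : a ⟶ c),
    ∃! p : Σ' (b : C) (_e : a ⟶ b), (b ⟶ c),
      E p.2.1 ∧ M p.2.2 ∧ p.2.1 ≫ p.2.2 = f

/-- Orthogonal factorization system. -/
structure IsOFS (C : Type u) [Category.{u} C]
    (E M : CategoryTheory.MorphismProperty C) : Prop where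
  E_id : ∀ a : C, E (𝟙 a)
  E_comp : ∀ {a b c : C} (f : a ⟶ b) (g : b ⟶ c), E f → E g → E (f ≫ g)
  M_id : ∀ a : C, M (𝟙 a)
  M_comp : ∀ {a b c : C} (f : a ⟶ b) (g : b ⟶ c), M f → M g → M (f ≫ g)
  fac : ∀ {a c : C} (f : a ⟶ c),
    ∃ (b : C) (e : a ⟶ b) (m : b ⟶ c), E e ∧ M m ∧ e ≫ m = f
  uniq : ∀ {a b b' c : C} (e : a ⟶ b) (m : b ⟶ c) (e' : a ⟶ b') (m' : b' ⟶ c),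
    E e → M m → E e' → M m' → e ≫ m = e' ≫ m' →
    ∃! θ : b ⟶ b', e ≫ θ = e' ∧ θ ≫ m' = m
  iso : ∀ {a b : C} (f : a ⟶ b), (E f ∧ M f) ↔ IsIso f

theorem pliftHeq {p q : Prop} (h : p = q) (a : ULift.{u} (PLift p))
    (b : ULift.{u} (PLift q)) : HEq a b := by
  subst h
  obtain ⟨⟨a⟩⟩ := a
  obtain ⟨⟨b⟩⟩ := b
  rfl

/-- The double category `D_{E,M}` of commutative squares of `C`, with vertical
morphisms in `E` and horizontal morphisms in `M`. -/
def Dbl (C : Type u) [Category.{u} C] (E M : CategoryTheory.MorphismProperty C)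
    (hEid : ∀ a : C, E (𝟙 a))
    (hEcomp : ∀ {a b c : C} (f : a ⟶ b) (g : b ⟶ c), E f → E g → E (f ≫ g))
    (hMid : ∀ a : C, M (𝟙 a))
    (hMcomp : ∀ {a b c : C} (f : a ⟶ b) (g : b ⟶ c), M f → M g → M (f ≫ g)) :
    DblCat.{u} where
  Obj := C
  Ver a b := {f : a ⟶ b // E f}
  Hor a b := {f : a ⟶ b // M f}
  vId a := ⟨𝟙 a, hEid a⟩
  vComp f g := ⟨f.1 ≫ g.1, hEcomp f.1 g.1 f.2 g.2⟩
  hId a := ⟨𝟙 a, hMid a⟩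
  hComp f g := ⟨f.1 ≫ g.1, hMcomp f.1 g.1 f.2 g.2⟩
  vId_comp f := Subtype.ext (Category.id_comp f.1)
  vComp_id f := Subtype.ext (Category.comp_id f.1)
  vAssoc f g h := Subtype.ext (Category.assoc f.1 g.1 h.1)
  hId_comp f := Subtype.ext (Category.id_comp f.1)
  hComp_id f := Subtype.ext (Category.comp_id f.1)
  hAssoc f g h := Subtype.ext (Category.assoc f.1 g.1 h.1)
  Sq t l r bo := ULift (PLift (t.1 ≫ r.1 = l.1 ≫ bo.1))
  vSq {a b c d e f t l r m l' r' bo} α β := ⟨⟨by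
    have h1 := α.down.down
    have h2 := β.down.down
    show t.1 ≫ (r.1 ≫ r'.1) = (l.1 ≫ l'.1) ≫ bo.1
    rw [← Category.assoc, h1, Category.assoc, h2, ← Category.assoc]⟩⟩
  hSq {a b c a' b' c' t1 t2 l m r b1 b2} α β := ⟨⟨by
    have h1 := α.down.down
    have h2 := β.down.down
    show (t1.1 ≫ t2.1) ≫ r.1 = l.1 ≫ (b1.1 ≫ b2.1)
    rw [Category.assoc, h2, ← Category.assoc, h1, Category.assoc]⟩⟩
  vIdSq g := ⟨⟨by simp⟩⟩
  hIdSq u := ⟨⟨by simp⟩⟩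
  vSq_id_comp α := pliftHeq (by simp) _ _
  vSq_comp_id α := pliftHeq (by simp) _ _
  vSq_assoc α β γ := pliftHeq (by simp) _ _
  hSq_id_comp α := pliftHeq (by simp) _ _
  hSq_comp_id α := pliftHeq (by simp) _ _
  hSq_assoc α β γ := pliftHeq (by simp) _ _
  interchange α γ β δ := by
    apply congrArg ULift.up
    apply congrArg PLift.up
    rfl
  vIdSq_hId a := by
    apply congrArg ULift.up
    apply congrArg PLift.up
    rfl
  vIdSq_hComp g h := by
    apply congrArg ULift.up
    apply congrArg PLift.up
    rfl
  hIdSq_vComp u v := by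
    apply congrArg ULift.up
    apply congrArg PLift.up
    rfl

end Paper

namespace Paper

/-- A (strict) double functor. -/
structure DblFunctor (X Y : DblCat.{u}) : Type u where
  obj : X.Obj → Y.Obj
  ver : ∀ {a b}, X.Ver a b → Y.Ver (obj a) (obj b)
  hor : ∀ {a b}, X.Hor a b → Y.Hor (obj a) (obj b)
  sq : ∀ {a b c d} {t : X.Hor a b} {l : X.Ver a c} {r : X.Ver b d} {bo : X.Hor c d},
    X.Sq t l r bo → Y.Sq (hor t) (ver l) (ver r) (hor bo)
  ver_id : ∀ a, ver (X.vId a) = Y.vId (obj a)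
  ver_comp : ∀ {a b c} (f : X.Ver a b) (g : X.Ver b c),
    ver (X.vComp f g) = Y.vComp (ver f) (ver g)
  hor_id : ∀ a, hor (X.hId a) = Y.hId (obj a)
  hor_comp : ∀ {a b c} (f : X.Hor a b) (g : X.Hor b c),
    hor (X.hComp f g) = Y.hComp (hor f) (hor g)
  sq_vId : ∀ {a b} (g : X.Hor a b), HEq (sq (X.vIdSq g)) (Y.vIdSq (hor g))
  sq_hId : ∀ {a b} (u : X.Ver a b), HEq (sq (X.hIdSq u)) (Y.hIdSq (ver u))
  sq_vComp : ∀ {a b c d e f : X.Obj} {t : X.Hor a b} {l : X.Ver a c} {r : X.Ver b d}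
    {m : X.Hor c d} {l' : X.Ver c e} {r' : X.Ver d f} {bo : X.Hor e f}
    (α : X.Sq t l r m) (β : X.Sq m l' r' bo),
    HEq (sq (X.vSq α β)) (Y.vSq (sq α) (sq β))
  sq_hComp : ∀ {a b c a' b' c' : X.Obj} {t1 : X.Hor a b} {t2 : X.Hor b c}
    {l : X.Ver a a'} {m : X.Ver b b'} {r : X.Ver c c'} {b1 : X.Hor a' b'} {b2 : X.Hor b' c'}
    (α : X.Sq t1 l m b1) (β : X.Sq t2 m r b2),
    HEq (sq (X.hSq α β)) (Y.hSq (sq α) (sq β))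

namespace DblFunctor

theorem sqCongr {Y Z : DblCat.{u}} (G : DblFunctor Y Z) {a b c d : Y.Obj}
    {t t' : Y.Hor a b} {l l' : Y.Ver a c} {r r' : Y.Ver b d} {bo bo' : Y.Hor c d}
    (ht : t = t') (hl : l = l') (hr : r = r') (hbo : bo = bo')
    (s : Y.Sq t l r bo) (s' : Y.Sq t' l' r' bo') (hs : HEq s s') :
    HEq (G.sq s) (G.sq s') := by
  subst ht; subst hl; subst hr; subst hbo
  exact heq_of_eq (congrArg G.sq (eq_of_heq hs))

/-- Identity double functor. -/
def id (X : DblCat.{u}) : DblFunctor X X where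
  obj a := a
  ver f := f
  hor g := g
  sq s := s
  ver_id _ := rfl
  ver_comp _ _ := rfl
  hor_id _ := rfl
  hor_comp _ _ := rfl
  sq_vId _ := HEq.rfl
  sq_hId _ := HEq.rfl
  sq_vComp _ _ := HEq.rfl
  sq_hComp _ _ := HEq.rfl

/-- Composition of double functors. -/
def comp {X Y Z : DblCat.{u}} (F : DblFunctor X Y) (G : DblFunctor Y Z) :
    DblFunctor X Z where
  obj a := G.obj (F.obj a)
  ver f := G.ver (F.ver f)
  hor g := G.hor (F.hor g)
  sq s := G.sq (F.sq s)
  ver_id a := by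
    show G.ver (F.ver (X.vId a)) = Z.vId (G.obj (F.obj a))
    rw [F.ver_id, G.ver_id]
  ver_comp f g := by
    show G.ver (F.ver (X.vComp f g)) = Z.vComp (G.ver (F.ver f)) (G.ver (F.ver g))
    rw [F.ver_comp, G.ver_comp]
  hor_id a := by
    show G.hor (F.hor (X.hId a)) = Z.hId (G.obj (F.obj a))
    rw [F.hor_id, G.hor_id]
  hor_comp f g := by
    show G.hor (F.hor (X.hComp f g)) = Z.hComp (G.hor (F.hor f)) (G.hor (F.hor g))
    rw [F.hor_comp, G.hor_comp]
  sq_vId g :=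
    HEq.trans (G.sqCongr rfl (F.ver_id _) (F.ver_id _) rfl _ _ (F.sq_vId g))
      (G.sq_vId (F.hor g))
  sq_hId u :=
    HEq.trans (G.sqCongr (F.hor_id _) rfl rfl (F.hor_id _) _ _ (F.sq_hId u))
      (G.sq_hId (F.ver u))
  sq_vComp α β :=
    HEq.trans (G.sqCongr rfl (F.ver_comp _ _) (F.ver_comp _ _) rfl _ _ (F.sq_vComp α β))
      (G.sq_vComp (F.sq α) (F.sq β))
  sq_hComp α β :=
    HEq.trans (G.sqCongr (F.hor_comp _ _) rfl rfl (F.hor_comp _ _) _ _ (F.sq_hComp α β))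
      (G.sq_hComp (F.sq α) (F.sq β))

end DblFunctor

end Paper

namespace Paper

open CategoryTheory

/-- Objects of the category `SFS`: categories equipped with a strict factorization
system. -/
structure SFSObj : Type (u + 1) where
  C : Type u
  [inst : Category.{u} C]
  E : MorphismProperty C
  M : MorphismProperty C
  isSFS : IsStrictFS C E M

attribute [instance] SFSObj.inst

/-- Morphisms of `SFS`: functors preserving both classes. -/
structure SFSHom (A B : SFSObj.{u}) : Type u where
  F : A.C ⥤ B.C
  hE : ∀ {a b : A.C} (f : a ⟶ b), A.E f → B.E (F.map f)
  hM : ∀ {a b : A.C} (f : a ⟶ b), A.M f → B.M (F.map f)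

instance : Category.{u, u + 1} SFSObj.{u} where
  Hom := SFSHom
  id A := ⟨Functor.id A.C, fun _ h => h, fun _ h => h⟩
  comp f g := ⟨f.F ⋙ g.F, fun φ h => g.hE _ (f.hE φ h), fun φ h => g.hM _ (f.hM φ h)⟩

/-- The category of codomain-discrete double categories and double functors. -/
def CodDiscrObj : Type (u + 1) := {X : DblCat.{u} // X.CodDiscrete}

instance : Category.{u, u + 1} CodDiscrObj.{u} where
  Hom A B := DblFunctor A.1 B.1
  id A := DblFunctor.id A.1
  comp F G := F.comp G

/-- The double category `D_{E,M}` associated to a strict factorization system. -/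
def DblOfSFS (A : SFSObj.{u}) : DblCat.{u} :=
  Dbl A.C A.E A.M A.isSFS.E_id A.isSFS.E_comp A.isSFS.M_id A.isSFS.M_comp

/-- The double functor `D_F` associated to a morphism of strict factorization
systems. -/
def DblHomOfSFS {A B : SFSObj.{u}} (f : SFSHom A B) :
    DblFunctor (DblOfSFS A) (DblOfSFS B) where
  obj := f.F.obj
  ver g := ⟨f.F.map g.1, f.hE g.1 g.2⟩
  hor g := ⟨f.F.map g.1, f.hM g.1 g.2⟩
  sq s := ⟨⟨by
    have h := s.down.down
    show f.F.map _ ≫ f.F.map _ = f.F.map _ ≫ f.F.map _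
    erw [← f.F.map_comp, ← f.F.map_comp, h]⟩⟩
  ver_id a := Subtype.ext (f.F.map_id a)
  ver_comp g h := Subtype.ext (f.F.map_comp g.1 h.1)
  hor_id a := Subtype.ext (f.F.map_id a)
  hor_comp g h := Subtype.ext (f.F.map_comp g.1 h.1)
  sq_vId g := pliftHeq (by simp [DblOfSFS, Dbl]; erw [f.F.map_id, f.F.map_id]; simp) _ _
  sq_hId u := pliftHeq (by simp [DblOfSFS, Dbl]; erw [f.F.map_id, f.F.map_id]; simp) _ _
  sq_vComp α β := pliftHeq (by
    simp [DblOfSFS, Dbl]; erw [f.F.map_comp, f.F.map_comp, Category.assoc]) _ _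
  sq_hComp α β := pliftHeq (by
    simp [DblOfSFS, Dbl]; erw [f.F.map_comp, f.F.map_comp, Category.assoc]) _ _

theorem pliftHeq' {p q : Prop} (hp : p) (hq : q) (a : ULift.{u} (PLift p))
    (b : ULift.{u} (PLift q)) : HEq a b :=
  pliftHeq (propext (iff_of_true hp hq)) a b

/-- Any two squares in `Dbl` are heterogeneously equal. -/
theorem dblSqHeq {C : Type u} [Category.{u} C] {E M : CategoryTheory.MorphismProperty C}
    {hEid hEcomp hMid hMcomp}
    {a b c d a' b' c' d' : C}
    {t : (Dbl C E M hEid hEcomp hMid hMcomp).Hor a b}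
    {l : (Dbl C E M hEid hEcomp hMid hMcomp).Ver a c}
    {r : (Dbl C E M hEid hEcomp hMid hMcomp).Ver b d}
    {bo : (Dbl C E M hEid hEcomp hMid hMcomp).Hor c d}
    {t' : (Dbl C E M hEid hEcomp hMid hMcomp).Hor a' b'}
    {l' : (Dbl C E M hEid hEcomp hMid hMcomp).Ver a' c'}
    {r' : (Dbl C E M hEid hEcomp hMid hMcomp).Ver b' d'}
    {bo' : (Dbl C E M hEid hEcomp hMid hMcomp).Hor c' d'}
    (s : (Dbl C E M hEid hEcomp hMid hMcomp).Sq t l r bo)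
    (s' : (Dbl C E M hEid hEcomp hMid hMcomp).Sq t' l' r' bo') : HEq s s' :=
  pliftHeq' s.down.down s'.down.down s s'

/-- Extensionality for double functors. -/
theorem DblFunctor.ext2 {X Y : DblCat.{u}} {F G : DblFunctor X Y}
    (h0 : F.obj = G.obj)
    (hv : ∀ (a b : X.Obj) (f : X.Ver a b), HEq (F.ver f) (G.ver f))
    (hh : ∀ (a b : X.Obj) (g : X.Hor a b), HEq (F.hor g) (G.hor g))
    (hs : ∀ (a b c d : X.Obj) (t : X.Hor a b) (l : X.Ver a c) (r : X.Ver b d)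
      (bo : X.Hor c d) (s : X.Sq t l r bo), HEq (F.sq s) (G.sq s)) : F = G := by
  obtain ⟨Fo, Fv, Fh, Fs, _, _, _, _, _, _, _, _⟩ := F
  obtain ⟨Go, Gv, Gh, Gs, _, _, _, _, _, _, _, _⟩ := G
  dsimp only at h0 hv hh hs
  subst h0
  have hv' : @Fv = @Gv := by
    funext a b f; exact eq_of_heq (hv a b f)
  subst hv'
  have hh' : @Fh = @Gh := by
    funext a b g; exact eq_of_heq (hh a b g)
  subst hh'
  have hs' : @Fs = @Gs := by
    funext a b c d t l r bo s; exact eq_of_heq (hs a b c d t l r bo s)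
  subst hs'
  rfl
section FacT

variable (A : SFSObj.{u})

/-- The chosen strict factorization of a morphism. -/
noncomputable def facT {a c : A.C} (φ : a ⟶ c) : Σ' (b : A.C) (_e : a ⟶ b), (b ⟶ c) :=
  (A.isSFS.fac φ).choose

theorem facT_spec {a c : A.C} (φ : a ⟶ c) :
    A.E (facT A φ).2.1 ∧ A.M (facT A φ).2.2 ∧ (facT A φ).2.1 ≫ (facT A φ).2.2 = φ :=
  (A.isSFS.fac φ).choose_spec.1

theorem facT_unique {a c : A.C} (φ : a ⟶ c) {b : A.C} {e : a ⟶ b} {m : b ⟶ c}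
    (hE : A.E e) (hM : A.M m) (hc : e ≫ m = φ) :
    (⟨b, e, m⟩ : Σ' (b : A.C) (_e : a ⟶ b), (b ⟶ c)) = facT A φ :=
  (A.isSFS.fac φ).choose_spec.2 ⟨b, e, m⟩ ⟨hE, hM, hc⟩

end FacT

/-- Extensionality for the corner-filling data in `D_{E,M}`. -/
theorem dblSigmaExt (A : SFSObj.{u}) {a b c : A.C} (g : (DblOfSFS A).Hor a b)
    (u : (DblOfSFS A).Ver b c)
    (p q : Σ' (bh : A.C) (l : (DblOfSFS A).Ver a bh) (bo : (DblOfSFS A).Hor bh c),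
      (DblOfSFS A).Sq g l u bo)
    (h : (⟨p.1, p.2.1.1, p.2.2.1.1⟩ : Σ' (b' : A.C) (_e : a ⟶ b'), (b' ⟶ c)) =
      ⟨q.1, q.2.1.1, q.2.2.1.1⟩) : p = q := by
  obtain ⟨pb, pl, pbo, ps⟩ := p
  obtain ⟨qb, ql, qbo, qs⟩ := q
  dsimp only at h
  injection h with h1 h2
  subst h1
  injection eq_of_heq h2 with h3 h4
  have hl : pl = ql := Subtype.ext h3
  subst hl
  have hbo : pbo = qbo := Subtype.ext h4
  subst hbo
  have hs : ps = qs := eq_of_heq (dblSqHeq ps qs)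
  subst hs
  rfl

/-- `D_{E,M}` is codomain-discrete. -/
theorem dblCodDiscrete (A : SFSObj.{u}) : (DblOfSFS A).CodDiscrete := by
  intro a b c g u
  have hspec := facT_spec A (g.1 ≫ u.1)
  refine ⟨⟨(facT A (g.1 ≫ u.1)).1, ⟨(facT A (g.1 ≫ u.1)).2.1, hspec.1⟩,
    ⟨(facT A (g.1 ≫ u.1)).2.2, hspec.2.1⟩, ⟨⟨hspec.2.2.symm⟩⟩⟩, trivial, ?_⟩
  rintro ⟨bh, l, bo, s⟩ -
  have hc : l.1 ≫ bo.1 = g.1 ≫ u.1 := s.down.down.symm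
  have h := facT_unique A (g.1 ≫ u.1) l.2 bo.2 hc
  exact dblSigmaExt A g u _ _ h
/-- The functor `SFS → CodDiscr`. -/
noncomputable def Fd : SFSObj.{u} ⥤ CodDiscrObj.{u} where
  obj A := ⟨DblOfSFS A, dblCodDiscrete A⟩
  map f := DblHomOfSFS f
  map_id _ := rfl
  map_comp _ _ := rfl

section Retract

variable {A B : SFSObj.{u}} (G : DblFunctor (DblOfSFS A) (DblOfSFS B))

/-- Object part of the functor extracted from a double functor. -/
def Robj : A.C → B.C := G.obj

/-- Morphism part of the functor extracted from a double functor
`D_{E,M} → D_{E',M'}`. -/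
noncomputable def Rmap {a c : A.C} (φ : a ⟶ c) : Robj G a ⟶ Robj G c :=
  (G.ver ⟨(facT A φ).2.1, (facT_spec A φ).1⟩).1 ≫
    (G.hor ⟨(facT A φ).2.2, (facT_spec A φ).2.1⟩).1

theorem Rmap_spec {a c : A.C} (φ : a ⟶ c) {b : A.C} (e : a ⟶ b) (m : b ⟶ c)
    (hE : A.E e) (hM : A.M m) (hc : e ≫ m = φ) :
    Rmap G φ = (G.ver ⟨e, hE⟩).1 ≫ (G.hor ⟨m, hM⟩).1 := by
  have key : ∀ (p : Σ' (b' : A.C) (_e : a ⟶ b'), (b' ⟶ c)) (hE' : A.E p.2.1)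
      (hM' : A.M p.2.2), p = ⟨b, e, m⟩ →
      (G.ver ⟨p.2.1, hE'⟩).1 ≫ (G.hor ⟨p.2.2, hM'⟩).1 =
        (G.ver ⟨e, hE⟩).1 ≫ (G.hor ⟨m, hM⟩).1 := by
    rintro ⟨pb, pe, pm⟩ hE' hM' hp
    injection hp with h1 h2
    subst h1
    injection h2 with h3 h4
    subst h3
    subst h4
    rfl
  exact key (facT A φ) (facT_spec A φ).1 (facT_spec A φ).2.1 (facT_unique A φ hE hM hc).symm

end Retract
section Retract

variable {A B : SFSObj.{u}} (G : DblFunctor (DblOfSFS A) (DblOfSFS B))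

theorem Rmap_ofE {a b : A.C} (e : a ⟶ b) (hE : A.E e) :
    Rmap G e = (G.ver ⟨e, hE⟩).1 := by
  rw [Rmap_spec G e e (𝟙 b) hE (A.isSFS.M_id b) (Category.comp_id e)]
  have h : G.hor ⟨𝟙 b, A.isSFS.M_id b⟩ = (DblOfSFS B).hId (G.obj b) := G.hor_id b
  rw [h]
  exact Category.comp_id _

theorem Rmap_ofM {a b : A.C} (m : a ⟶ b) (hM : A.M m) :
    Rmap G m = (G.hor ⟨m, hM⟩).1 := by
  rw [Rmap_spec G m (𝟙 a) m (A.isSFS.E_id a) hM (Category.id_comp m)]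
  have h : G.ver ⟨𝟙 a, A.isSFS.E_id a⟩ = (DblOfSFS B).vId (G.obj a) := G.ver_id a
  rw [h]
  exact Category.id_comp _

/-- The functor extracted from a double functor `D_{E,M} → D_{E',M'}`. -/
noncomputable def Rfun : A.C ⥤ B.C where
  obj := Robj G
  map := Rmap G
  map_id a := by
    show Rmap G (𝟙 a) = 𝟙 _
    rw [Rmap_ofE G (𝟙 a) (A.isSFS.E_id a)]
    have h : G.ver ⟨𝟙 a, A.isSFS.E_id a⟩ = (DblOfSFS B).vId (G.obj a) := G.ver_id a
    rw [h]
    rfl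
  map_comp {a c e} φ ψ := by
    show Rmap G (φ ≫ ψ) = Rmap G φ ≫ Rmap G ψ
    -- factor φ and ψ
    obtain ⟨hE1, hM1, hc1⟩ := facT_spec A φ
    obtain ⟨hE2, hM2, hc2⟩ := facT_spec A ψ
    set e1 := (facT A φ).2.1
    set m1 := (facT A φ).2.2
    set e2 := (facT A ψ).2.1
    set m2 := (facT A ψ).2.2
    obtain ⟨hE3, hM3, hc3⟩ := facT_spec A (m1 ≫ e2)
    set e3 := (facT A (m1 ≫ e2)).2.1
    set m3 := (facT A (m1 ≫ e2)).2.2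
    have hc : (e1 ≫ e3) ≫ (m3 ≫ m2) = φ ≫ ψ := by
      conv_rhs => rw [← hc1, ← hc2]
      rw [show (e1 ≫ e3) ≫ (m3 ≫ m2) = e1 ≫ ((e3 ≫ m3) ≫ m2) by
        simp [Category.assoc], hc3]
      simp [Category.assoc]
    rw [Rmap_spec G (φ ≫ ψ) (e1 ≫ e3) (m3 ≫ m2)
      (A.isSFS.E_comp _ _ hE1 hE3) (A.isSFS.M_comp _ _ hM3 hM2) hc]
    rw [Rmap_spec G φ e1 m1 hE1 hM1 hc1, Rmap_spec G ψ e2 m2 hE2 hM2 hc2]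
    have hvc1 : (G.ver ⟨e1 ≫ e3, A.isSFS.E_comp _ _ hE1 hE3⟩).1 =
        (G.ver ⟨e1, hE1⟩).1 ≫ (G.ver ⟨e3, hE3⟩).1 :=
      congrArg Subtype.val (G.ver_comp ⟨e1, hE1⟩ ⟨e3, hE3⟩)
    have hhc1 : (G.hor ⟨m3 ≫ m2, A.isSFS.M_comp _ _ hM3 hM2⟩).1 =
        (G.hor ⟨m3, hM3⟩).1 ≫ (G.hor ⟨m2, hM2⟩).1 :=
      congrArg Subtype.val (G.hor_comp ⟨m3, hM3⟩ ⟨m2, hM2⟩)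
    rw [hvc1, hhc1]
    -- middle square
    have sq : (DblOfSFS A).Sq (⟨m1, hM1⟩ : (DblOfSFS A).Hor _ _)
        (⟨e3, hE3⟩ : (DblOfSFS A).Ver _ _) (⟨e2, hE2⟩ : (DblOfSFS A).Ver _ _)
        (⟨m3, hM3⟩ : (DblOfSFS A).Hor _ _) := ⟨⟨hc3.symm⟩⟩
    have hmid := (G.sq sq).down.down
    erw [Category.assoc, ← Category.assoc (G.ver ⟨e3, hE3⟩).1, ← hmid]
    exact (whisker_eq _ (Category.assoc _ _ _)).trans (Category.assoc _ _ _).symm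

/-- The morphism of `SFS` extracted from a double functor. -/
noncomputable def R : SFSHom A B where
  F := Rfun G
  hE {a b} φ h := by
    have := Rmap_ofE G φ h
    show B.E (Rmap G φ)
    rw [this]
    exact (G.ver ⟨φ, h⟩).2
  hM {a b} φ h := by
    have := Rmap_ofM G φ h
    show B.M (Rmap G φ)
    rw [this]
    exact (G.hor ⟨φ, h⟩).2

end Retract
theorem SFSHom.ext2 {A B : SFSObj.{u}} {f g : SFSHom A B} (h : f.F = g.F) : f = g := by
  cases f; cases g; cases h; rfl

theorem R_retract {A B : SFSObj.{u}} (f : SFSHom A B) : R (DblHomOfSFS f) = f := by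
  apply SFSHom.ext2
  refine CategoryTheory.Functor.ext (fun a => rfl) ?_
  intro a c φ
  show _ = 𝟙 _ ≫ f.F.map φ ≫ 𝟙 _
  rw [Category.id_comp, Category.comp_id]
  obtain ⟨hE1, hM1, hc1⟩ := facT_spec A φ
  show Rmap (DblHomOfSFS f) φ = f.F.map φ
  rw [Rmap_spec (DblHomOfSFS f) φ (facT A φ).2.1 (facT A φ).2.2 hE1 hM1 hc1]
  show f.F.map (facT A φ).2.1 ≫ f.F.map (facT A φ).2.2 = f.F.map φ
  rw [← f.F.map_comp, hc1]

theorem R_section {A B : SFSObj.{u}} (G : DblFunctor (DblOfSFS A) (DblOfSFS B)) :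
    DblHomOfSFS (R G) = G := by
  refine DblFunctor.ext2 rfl ?_ ?_ ?_
  · intro a b u
    apply heq_of_eq
    apply Subtype.ext
    show Rmap G u.1 = (G.ver u).1
    rw [Rmap_ofE G u.1 u.2]
    exact congrArg (fun x => (G.ver x).1) (Subtype.ext rfl)
  · intro a b g
    apply heq_of_eq
    apply Subtype.ext
    show Rmap G g.1 = (G.hor g).1
    rw [Rmap_ofM G g.1 g.2]
    exact congrArg (fun x => (G.hor x).1) (Subtype.ext rfl)
  · intro a b c d t l r bo s
    exact dblSqHeq _ _

theorem Fd_faithful : (Fd.{u}).Faithful where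
  map_injective {A B} f g h := by
    have h1 : DblHomOfSFS f = DblHomOfSFS g := h
    rw [← R_retract f, ← R_retract g, h1]

theorem Fd_full : (Fd.{u}).Full where
  map_surjective {A B} G := ⟨R G, R_section G⟩
section Corners

open DblCat

variable (X : DblCat.{u}) (hX : X.CodDiscrete)
include hX

/-- The unique square filling a top-right corner. -/
noncomputable def fill {a b c : X.Obj} (g : X.Hor a b) (u : X.Ver b c) :
    Σ' (bh : X.Obj) (l : X.Ver a bh) (bo : X.Hor bh c), X.Sq g l u bo :=
  (hX g u).choose

theorem fill_unique {a b c : X.Obj} {g : X.Hor a b} {u : X.Ver b c} {bh : X.Obj}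
    {l : X.Ver a bh} {bo : X.Hor bh c} (κ : X.Sq g l u bo) :
    (⟨bh, l, bo, κ⟩ : Σ' (bh : X.Obj) (l : X.Ver a bh) (bo : X.Hor bh c), X.Sq g l u bo) =
      fill X hX g u :=
  (hX g u).choose_spec.2 ⟨bh, l, bo, κ⟩ trivial

theorem sqHeq' {a b c : X.Obj} {g : X.Hor a b} {u : X.Ver b c} {bh bh' : X.Obj}
    {l : X.Ver a bh} {bo : X.Hor bh c} {l' : X.Ver a bh'} {bo' : X.Hor bh' c}
    (κ : X.Sq g l u bo) (κ' : X.Sq g l' u bo') : HEq κ κ' := by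
  have h := (fill_unique X hX κ).trans (fill_unique X hX κ').symm
  have h2 : HEq ((⟨bh, l, bo, κ⟩ : Σ' (bh : X.Obj) (l : X.Ver a bh) (bo : X.Hor bh c),
      X.Sq g l u bo)).2.2.2 ((⟨bh', l', bo', κ'⟩ : Σ' (bh : X.Obj) (l : X.Ver a bh)
      (bo : X.Hor bh c), X.Sq g l u bo)).2.2.2 := by rw [h]
  exact h2

/-- Any two squares with equal top and right side are equal. -/
theorem sqHeqGen {a b c : X.Obj} {g g' : X.Hor a b} {u u' : X.Ver b c} {bh bh' : X.Obj}
    {l : X.Ver a bh} {bo : X.Hor bh c} {l' : X.Ver a bh'} {bo' : X.Hor bh' c}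
    (hg : g = g') (hu : u = u')
    (κ : X.Sq g l u bo) (κ' : X.Sq g' l' u' bo') : HEq κ κ' := by
  subst hg; subst hu; exact sqHeq' X hX κ κ'

/-- Composition of corners via the unique filler. -/
noncomputable def cnrComp {a b c : X.Obj} (f : X.Corner a b) (g : X.Corner b c) :
    X.Corner a c :=
  ⟨(fill X hX f.h g.v).1, X.vComp f.v (fill X hX f.h g.v).2.1,
    X.hComp (fill X hX f.h g.v).2.2.1 g.h⟩

theorem cnrComp_spec {a b c : X.Obj} (f : X.Corner a b) (g : X.Corner b c) {bh : X.Obj}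
    (l : X.Ver f.mid bh) (bo : X.Hor bh g.mid) (κ : X.Sq f.h l g.v bo) :
    cnrComp X hX f g = ⟨bh, X.vComp f.v l, X.hComp bo g.h⟩ := by
  show (⟨(fill X hX f.h g.v).1, X.vComp f.v (fill X hX f.h g.v).2.1,
    X.hComp (fill X hX f.h g.v).2.2.1 g.h⟩ : X.Corner a c) = _
  rw [← fill_unique X hX κ]

end Corners
section Corners2

open DblCat

variable (X : DblCat.{u}) (hX : X.CodDiscrete)

/-- The category of corners of a codomain-discrete double category. -/
noncomputable def cnrCat : Category.{u} X.Obj where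
  Hom a b := X.Corner a b
  id a := ⟨a, X.vId a, X.hId a⟩
  comp f g := cnrComp X hX f g
  id_comp {a b} f := by
    show cnrComp X hX ⟨a, X.vId a, X.hId a⟩ f = f
    rw [cnrComp_spec X hX ⟨a, X.vId a, X.hId a⟩ f f.v (X.hId f.mid) (X.hIdSq f.v)]
    obtain ⟨m, v, h⟩ := f
    dsimp only
    rw [X.vId_comp, X.hId_comp]
  comp_id {a b} f := by
    show cnrComp X hX f ⟨b, X.vId b, X.hId b⟩ = f
    rw [cnrComp_spec X hX f ⟨b, X.vId b, X.hId b⟩ (X.vId f.mid) f.h (X.vIdSq f.h)]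
    obtain ⟨m, v, h⟩ := f
    dsimp only
    rw [X.vComp_id, X.hComp_id]
  assoc {a b c d} f g h := by
    obtain ⟨bh1, l1, b1, κ1⟩ : Σ' (bh : X.Obj) (l : X.Ver f.mid bh) (bo : X.Hor bh g.mid),
      X.Sq f.h l g.v bo := fill X hX f.h g.v
    obtain ⟨bh2, l2, b2, κ2⟩ : Σ' (bh : X.Obj) (l : X.Ver g.mid bh) (bo : X.Hor bh h.mid),
      X.Sq g.h l h.v bo := fill X hX g.h h.v
    obtain ⟨bh3, l3, b3, κ3⟩ : Σ' (bh : X.Obj) (l : X.Ver bh1 bh) (bo : X.Hor bh bh2),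
      X.Sq b1 l l2 bo := fill X hX b1 l2
    have hfg : cnrComp X hX f g = ⟨bh1, X.vComp f.v l1, X.hComp b1 g.h⟩ :=
      cnrComp_spec X hX f g l1 b1 κ1
    have hgh : cnrComp X hX g h = ⟨bh2, X.vComp g.v l2, X.hComp b2 h.h⟩ :=
      cnrComp_spec X hX g h l2 b2 κ2
    show cnrComp X hX (cnrComp X hX f g) h = cnrComp X hX f (cnrComp X hX g h)
    rw [hfg, hgh]
    rw [cnrComp_spec X hX ⟨bh1, X.vComp f.v l1, X.hComp b1 g.h⟩ h l3 (X.hComp b3 b2)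
      (X.hSq κ3 κ2)]
    rw [cnrComp_spec X hX f ⟨bh2, X.vComp g.v l2, X.hComp b2 h.h⟩ (X.vComp l1 l3) b3
      (X.vSq κ1 κ3)]
    dsimp only
    rw [X.vAssoc, X.hAssoc]

/-- The class of vertical corners. -/
def CnrE {a b : X.Obj} (f : X.Corner a b) : Prop :=
  ∃ u : X.Ver a b, f = ⟨b, u, X.hId b⟩

/-- The class of horizontal corners. -/
def CnrM {a b : X.Obj} (f : X.Corner a b) : Prop :=
  ∃ g : X.Hor a b, f = ⟨a, X.vId a, g⟩

theorem cnrE_comp {a b c : X.Obj} {f : X.Corner a b} {g : X.Corner b c}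
    (hf : CnrE X f) (hg : CnrE X g) : CnrE X (cnrComp X hX f g) := by
  obtain ⟨u, rfl⟩ := hf
  obtain ⟨v, rfl⟩ := hg
  refine ⟨X.vComp u v, ?_⟩
  rw [cnrComp_spec X hX ⟨b, u, X.hId b⟩ ⟨c, v, X.hId c⟩ v (X.hId c) (X.hIdSq v)]
  dsimp only
  rw [X.hId_comp]

theorem cnrM_comp {a b c : X.Obj} {f : X.Corner a b} {g : X.Corner b c}
    (hf : CnrM X f) (hg : CnrM X g) : CnrM X (cnrComp X hX f g) := by
  obtain ⟨s, rfl⟩ := hf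
  obtain ⟨t, rfl⟩ := hg
  refine ⟨X.hComp s t, ?_⟩
  rw [cnrComp_spec X hX ⟨a, X.vId a, s⟩ ⟨b, X.vId b, t⟩ (X.vId a) s (X.vIdSq s)]
  dsimp only
  rw [X.vId_comp]

theorem cnrEM_comp {a b c : X.Obj} (u : X.Ver a b) (g : X.Hor b c) :
    cnrComp X hX ⟨b, u, X.hId b⟩ ⟨b, X.vId b, g⟩ = ⟨b, u, g⟩ := by
  rw [cnrComp_spec X hX ⟨b, u, X.hId b⟩ ⟨b, X.vId b, g⟩ (X.vId b) (X.hId b)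
    (X.hIdSq (X.vId b))]
  dsimp only
  rw [X.vComp_id, X.hId_comp]

/-- The strict factorization system on the category of corners. -/
theorem cnrIsSFS : @IsStrictFS X.Obj (cnrCat X hX) (fun _ _ f => CnrE X f)
    (fun _ _ f => CnrM X f) := by
  letI : Category.{u} X.Obj := cnrCat X hX
  refine ⟨fun a => ⟨X.vId a, rfl⟩, fun f g hf hg => cnrE_comp X hX hf hg,
    fun a => ⟨X.hId a, rfl⟩, fun f g hf hg => cnrM_comp X hX hf hg, ?_⟩
  intro a c f
  obtain ⟨fm, fv, fh⟩ := f
  refine ⟨⟨fm, ⟨fm, fv, X.hId fm⟩, ⟨fm, X.vId fm, fh⟩⟩,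
    ⟨⟨fv, rfl⟩, ⟨fh, rfl⟩, ?_⟩, ?_⟩
  · show cnrComp X hX _ _ = _
    rw [cnrEM_comp X hX fv fh]
  · rintro ⟨b', e, m⟩ ⟨⟨u, hu⟩, ⟨g', hg⟩, hc⟩
    dsimp only at hu hg hc
    rw [hu, hg] at hc
    have hc' : cnrComp X hX ⟨b', u, X.hId b'⟩ ⟨b', X.vId b', g'⟩ =
        (⟨fm, fv, fh⟩ : X.Corner a c) := hc
    rw [cnrEM_comp X hX u g'] at hc'
    injection hc' with h1 h2 h3
    subst h1
    have h2' := eq_of_heq h2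
    subst h2'
    have h3' := eq_of_heq h3
    subst h3'
    rw [hu, hg]

end Corners2
section Corners3

open DblCat

variable (X : DblCat.{u}) (hX : X.CodDiscrete)

/-- The strict factorization system of corners. -/
noncomputable def CnrSFS : SFSObj.{u} where
  C := X.Obj
  inst := cnrCat X hX
  E := fun _ _ f => CnrE X f
  M := fun _ _ f => CnrM X f
  isSFS := cnrIsSFS X hX

/-- Extract a vertical morphism from a vertical corner. -/
noncomputable def phiVer {a b : X.Obj} (f : (DblOfSFS (CnrSFS X hX)).Ver a b) :
    X.Ver a b := f.2.choose

/-- Extract a horizontal morphism from a horizontal corner. -/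
noncomputable def phiHor {a b : X.Obj} (f : (DblOfSFS (CnrSFS X hX)).Hor a b) :
    X.Hor a b := f.2.choose

theorem phiVer_eq {a b : X.Obj} (f : (DblOfSFS (CnrSFS X hX)).Ver a b) {u : X.Ver a b}
    (hu : f.1 = ⟨b, u, X.hId b⟩) : phiVer X hX f = u := by
  have h := (f.2.choose_spec.symm.trans hu :
    (⟨b, phiVer X hX f, X.hId b⟩ : X.Corner a b) = ⟨b, u, X.hId b⟩)
  injection h with h1 h2 h3

theorem phiHor_eq {a b : X.Obj} (f : (DblOfSFS (CnrSFS X hX)).Hor a b) {g : X.Hor a b}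
    (hg : f.1 = ⟨a, X.vId a, g⟩) : phiHor X hX f = g := by
  have h := (f.2.choose_spec.symm.trans hg :
    (⟨a, X.vId a, phiHor X hX f⟩ : X.Corner a b) = ⟨a, X.vId a, g⟩)
  injection h with h1 h2 h3

theorem phiVer_spec {a b : X.Obj} (f : (DblOfSFS (CnrSFS X hX)).Ver a b) :
    f.1 = ⟨b, phiVer X hX f, X.hId b⟩ := f.2.choose_spec

theorem phiHor_spec {a b : X.Obj} (f : (DblOfSFS (CnrSFS X hX)).Hor a b) :
    f.1 = ⟨a, X.vId a, phiHor X hX f⟩ := f.2.choose_spec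

/-- Building a square in `X` from a commuting corner square. -/
noncomputable def phiSqAux {a b c d : X.Obj} (g : X.Hor a b) (u : X.Ver b d) (l : X.Ver a c)
    (bo : X.Hor c d)
    (h : cnrComp X hX ⟨a, X.vId a, g⟩ ⟨d, u, X.hId d⟩ =
      cnrComp X hX ⟨c, l, X.hId c⟩ ⟨c, X.vId c, bo⟩) :
    X.Sq g l u bo := by
  rw [cnrEM_comp X hX l bo] at h
  obtain ⟨bh, l0, b0, κ0⟩ : Σ' (bh : X.Obj) (l' : X.Ver a bh) (bo' : X.Hor bh d),
    X.Sq g l' u bo' := fill X hX g u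
  rw [cnrComp_spec X hX ⟨a, X.vId a, g⟩ ⟨d, u, X.hId d⟩ l0 b0 κ0] at h
  dsimp only at h
  rw [X.vId_comp, X.hComp_id] at h
  injection h with h1 h2 h3
  subst h1
  have h2' := eq_of_heq h2
  subst h2'
  have h3' := eq_of_heq h3
  subst h3'
  exact κ0

theorem phiVer_comp {a b c : X.Obj} (f : (DblOfSFS (CnrSFS X hX)).Ver a b)
    (g : (DblOfSFS (CnrSFS X hX)).Ver b c) :
    phiVer X hX ((DblOfSFS (CnrSFS X hX)).vComp f g) =
      X.vComp (phiVer X hX f) (phiVer X hX g) := by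
  apply phiVer_eq X hX
  show cnrComp X hX f.1 g.1 = _
  rw [phiVer_spec X hX f, phiVer_spec X hX g]
  rw [cnrComp_spec X hX ⟨b, phiVer X hX f, X.hId b⟩ ⟨c, phiVer X hX g, X.hId c⟩
    (phiVer X hX g) (X.hId c) (X.hIdSq (phiVer X hX g))]
  dsimp only
  rw [X.hId_comp]

theorem phiHor_comp {a b c : X.Obj} (f : (DblOfSFS (CnrSFS X hX)).Hor a b)
    (g : (DblOfSFS (CnrSFS X hX)).Hor b c) :
    phiHor X hX ((DblOfSFS (CnrSFS X hX)).hComp f g) =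
      X.hComp (phiHor X hX f) (phiHor X hX g) := by
  apply phiHor_eq X hX
  show cnrComp X hX f.1 g.1 = _
  rw [phiHor_spec X hX f, phiHor_spec X hX g]
  rw [cnrComp_spec X hX ⟨a, X.vId a, phiHor X hX f⟩ ⟨b, X.vId b, phiHor X hX g⟩
    (X.vId a) (phiHor X hX f) (X.vIdSq (phiHor X hX f))]
  dsimp only
  rw [X.vId_comp]

set_option maxHeartbeats 1000000 in
/-- The double functor from `D` of corners back to `X`. -/
noncomputable def Phi : DblFunctor (DblOfSFS (CnrSFS X hX)) X where
  obj a := a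
  ver f := phiVer X hX f
  hor f := phiHor X hX f
  sq {a b c d t l r bo} s := phiSqAux X hX (phiHor X hX t) (phiVer X hX r)
    (phiVer X hX l) (phiHor X hX bo) (by
      have h := s.down.down
      rw [phiHor_spec X hX t, phiVer_spec X hX r, phiVer_spec X hX l,
        phiHor_spec X hX bo] at h
      exact h)
  ver_id a := phiVer_eq X hX _ rfl
  ver_comp f g := phiVer_comp X hX f g
  hor_id a := phiHor_eq X hX _ rfl
  hor_comp f g := phiHor_comp X hX f g
  sq_vId g := sqHeqGen X hX rfl (phiVer_eq X hX _ rfl) _ _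
  sq_hId u := sqHeqGen X hX (phiHor_eq X hX _ rfl) rfl _ _
  sq_vComp α β := sqHeqGen X hX rfl (phiVer_comp X hX _ _) _ _
  sq_hComp α β := sqHeqGen X hX (phiHor_comp X hX _ _) rfl _ _

end Corners3
section Corners4

open DblCat

variable (X : DblCat.{u}) (hX : X.CodDiscrete)

theorem dblSqHeq2 (A : SFSObj.{u}) {a b c d a' b' c' d' : A.C}
    {t : (DblOfSFS A).Hor a b} {l : (DblOfSFS A).Ver a c} {r : (DblOfSFS A).Ver b d}
    {bo : (DblOfSFS A).Hor c d} {t' : (DblOfSFS A).Hor a' b'} {l' : (DblOfSFS A).Ver a' c'}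
    {r' : (DblOfSFS A).Ver b' d'} {bo' : (DblOfSFS A).Hor c' d'}
    (s : (DblOfSFS A).Sq t l r bo) (s' : (DblOfSFS A).Sq t' l' r' bo') : HEq s s' :=
  pliftHeq' s.down.down s'.down.down s s'

/-- The double functor from `X` to the double category of corner squares. -/
noncomputable def Psi : DblFunctor X (DblOfSFS (CnrSFS X hX)) where
  obj a := a
  ver {a b} u := ⟨⟨b, u, X.hId b⟩, ⟨u, rfl⟩⟩
  hor {a b} g := ⟨⟨a, X.vId a, g⟩, ⟨g, rfl⟩⟩
  sq {a b c d} {t l r bo} κ := ⟨⟨by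
    show cnrComp X hX ⟨a, X.vId a, t⟩ ⟨d, r, X.hId d⟩ =
      cnrComp X hX ⟨c, l, X.hId c⟩ ⟨c, X.vId c, bo⟩
    rw [cnrEM_comp X hX l bo]
    rw [cnrComp_spec X hX ⟨a, X.vId a, t⟩ ⟨d, r, X.hId d⟩ l bo κ]
    dsimp only
    rw [X.vId_comp, X.hComp_id]⟩⟩
  ver_id a := rfl
  ver_comp {a b c} u v := by
    apply Subtype.ext
    show _ = cnrComp X hX ⟨b, u, X.hId b⟩ ⟨c, v, X.hId c⟩
    rw [cnrComp_spec X hX ⟨b, u, X.hId b⟩ ⟨c, v, X.hId c⟩ v (X.hId c) (X.hIdSq v)]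
    dsimp only
    rw [X.hId_comp]
  hor_id a := rfl
  hor_comp {a b c} g h := by
    apply Subtype.ext
    show _ = cnrComp X hX ⟨a, X.vId a, g⟩ ⟨b, X.vId b, h⟩
    rw [cnrComp_spec X hX ⟨a, X.vId a, g⟩ ⟨b, X.vId b, h⟩ (X.vId a) g (X.vIdSq g)]
    dsimp only
    rw [X.vId_comp]
  sq_vId g := dblSqHeq2 (CnrSFS X hX) _ _
  sq_hId u := dblSqHeq2 (CnrSFS X hX) _ _
  sq_vComp α β := dblSqHeq2 (CnrSFS X hX) _ _
  sq_hComp α β := dblSqHeq2 (CnrSFS X hX) _ _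

theorem phi_psi : DblFunctor.comp (Phi X hX) (Psi X hX) =
    DblFunctor.id (DblOfSFS (CnrSFS X hX)) := by
  refine DblFunctor.ext2 rfl ?_ ?_ ?_
  · intro a b f
    apply heq_of_eq
    apply Subtype.ext
    exact (phiVer_spec X hX f).symm
  · intro a b f
    apply heq_of_eq
    apply Subtype.ext
    exact (phiHor_spec X hX f).symm
  · intro a b c d t l r bo s
    exact dblSqHeq2 (CnrSFS X hX) _ _

theorem psi_phi : DblFunctor.comp (Psi X hX) (Phi X hX) = DblFunctor.id X := by
  refine DblFunctor.ext2 rfl ?_ ?_ ?_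
  · intro a b u
    exact heq_of_eq (phiVer_eq X hX _ rfl)
  · intro a b g
    exact heq_of_eq (phiHor_eq X hX _ rfl)
  · intro a b c d t l r bo s
    exact sqHeqGen X hX (phiHor_eq X hX _ rfl) (phiVer_eq X hX _ rfl) _ _

end Corners4

theorem Fd_essSurj : (Fd.{u}).EssSurj where
  mem_essImage Y :=
    ⟨CnrSFS Y.1 Y.2,
      ⟨{ hom := Phi Y.1 Y.2
         inv := Psi Y.1 Y.2
         hom_inv_id := phi_psi Y.1 Y.2
         inv_hom_id := psi_phi Y.1 Y.2 }⟩⟩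

open DblCat in
/-- The constructions `X ↦ (E_X, M_X)` on `Cnr X` and
`(E,M) ↦ D_{E,M}` define mutually inverse equivalences between the category of
codomain-discrete double categories and the category of strict factorization systems.
We formalize this by asserting that the functor `SFS → CodDiscr`, acting as `D` on
objects and morphisms, is an equivalence of categories (its quasi-inverse being the
category-of-corners construction). -/
theorem statement7 :
    ∃ Fd : SFSObj.{u} ⥤ CodDiscrObj.{u},
      (∀ A : SFSObj.{u}, (Fd.obj A).1 = DblOfSFS A) ∧
      (∀ {A B : SFSObj.{u}} (f : A ⟶ B), HEq (Fd.map f) (DblHomOfSFS f)) ∧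
      Fd.IsEquivalence := by
  exact ⟨Fd.{u}, fun A => rfl, fun f => HEq.rfl,
    { faithful := Fd_faithful, full := Fd_full, essSurj := Fd_essSurj }⟩

end Paper
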